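/- Define the recursion c_{i+1} = p(c_i)·(n·c_i² + c_min²)/((n+1)·c_i) + (1 - p(c_i))·c_i where p(c) = c·(c² - c_min²)^((n-1)/2)·ζ_n / (2^n · λ) for a fixed λ > 0 large enough that p(c_0) ≤ 1, with c_0 > c_min and n ≥ 2. Then c_i → c_min and the convergence is sublinear: lim_{i→∞} (c_{i+1} - c_min)/(c_i - c_min) = 1. -/

import Mathlib

open Filter Real

set_option maxHeartbeats 1000000 in
/-- With state-dependent success probability
`p(c) = c (c² - c_min²)^((n-1)/2) ζ_n / (2^n λ)` (uniform global sampling of a domain of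
measure `λ`), the recursion `c_{i+1} = p(c_i) E(c_i) + (1 - p(c_i)) c_i` converges to `c_min`
sublinearly: the ratio of successive errors tends to `1`. -/
theorem global_sampling_recursion_sublinear (n : ℕ) (hn : 2 ≤ n) (cmin : ℝ) (hmin : 0 < cmin)
    (lam : ℝ) (hlam : 0 < lam) (p : ℝ → ℝ)
    (hp : ∀ x, p x = x * (x ^ 2 - cmin ^ 2) ^ (((n : ℝ) - 1) / 2) *
        (Real.pi ^ ((n : ℝ) / 2) / Real.Gamma ((n : ℝ) / 2 + 1)) / (2 ^ n * lam))
    (c : ℕ → ℝ) (h0 : cmin < c 0) (hp0 : p (c 0) ≤ 1)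
    (hrec : ∀ i, c (i + 1) =
      p (c i) * (((n : ℝ) * (c i) ^ 2 + cmin ^ 2) / (((n : ℝ) + 1) * c i)) +
        (1 - p (c i)) * c i) :
    Tendsto c atTop (nhds cmin) ∧
      Tendsto (fun i => (c (i + 1) - cmin) / (c i - cmin)) atTop (nhds 1) := by
  have hn2 : (2 : ℝ) ≤ (n : ℝ) := by exact_mod_cast hn
  set e : ℝ := ((n : ℝ) - 1) / 2 with hedef
  have he : 0 < e := by rw [hedef]; linarith
  have hζ : 0 < Real.pi ^ ((n : ℝ) / 2) / Real.Gamma ((n : ℝ) / 2 + 1) :=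
    div_pos (Real.rpow_pos_of_pos Real.pi_pos _) (Real.Gamma_pos_of_pos (by positivity))
  have hden : (0 : ℝ) < 2 ^ n * lam := by positivity
  set K : ℝ := (Real.pi ^ ((n : ℝ) / 2) / Real.Gamma ((n : ℝ) / 2 + 1)) / (2 ^ n * lam)
    with hKdef
  have hK : 0 < K := div_pos hζ hden
  have hp' : ∀ x, p x = x * (x ^ 2 - cmin ^ 2) ^ e * K := by
    intro x; rw [hp x, hKdef, hedef]; ring
  have hc00 : 0 < c 0 := hmin.trans h0
  -- positivity and monotonicity of p
  have hppos : ∀ x, cmin < x → 0 < p x := by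
    intro x hx
    rw [hp' x]
    have hx0 : 0 < x := hmin.trans hx
    have hb : 0 < x ^ 2 - cmin ^ 2 := by nlinarith
    have := Real.rpow_pos_of_pos hb e
    positivity
  have hpmono : ∀ x y, cmin ≤ x → x ≤ y → p x ≤ p y := by
    intro x y hx hxy
    rw [hp' x, hp' y]
    have hx0 : 0 ≤ x := hmin.le.trans hx
    have hb : 0 ≤ x ^ 2 - cmin ^ 2 := by nlinarith
    have hb2 : x ^ 2 - cmin ^ 2 ≤ y ^ 2 - cmin ^ 2 := by nlinarith
    have hr := Real.rpow_le_rpow hb hb2 he.le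
    have h1 : x * (x ^ 2 - cmin ^ 2) ^ e ≤ y * (y ^ 2 - cmin ^ 2) ^ e :=
      mul_le_mul hxy hr (Real.rpow_nonneg hb e) (by linarith)
    exact mul_le_mul_of_nonneg_right h1 hK.le
  -- the contraction factor
  set q : ℝ → ℝ := fun x => p x * ((x + cmin) / (((n : ℝ) + 1) * x)) with hqdef
  have hqpos : ∀ x, cmin < x → 0 < q x := by
    intro x hx
    have hx0 : 0 < x := hmin.trans hx
    exact mul_pos (hppos x hx) (div_pos (by linarith) (by positivity))
  have hqlt : ∀ x, cmin < x → x ≤ c 0 → q x < 1 := by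
    intro x hx hx0
    have hxp : 0 < x := hmin.trans hx
    have hp1 : p x ≤ 1 := le_trans (hpmono x (c 0) hx.le hx0) hp0
    have hpn : 0 ≤ p x := (hppos x hx).le
    have hr1 : (x + cmin) / (((n : ℝ) + 1) * x) < 1 := by
      rw [div_lt_one (by positivity)]
      nlinarith
    have hr0 : 0 ≤ (x + cmin) / (((n : ℝ) + 1) * x) := by positivity
    calc q x = p x * ((x + cmin) / (((n : ℝ) + 1) * x)) := rfl
      _ ≤ 1 * ((x + cmin) / (((n : ℝ) + 1) * x)) := mul_le_mul_of_nonneg_right hp1 hr0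
      _ < 1 := by rw [one_mul]; exact hr1
  -- the recursion in error form
  have hstep : ∀ i, cmin < c i → c (i + 1) = cmin + (c i - cmin) * (1 - q (c i)) := by
    intro i hi
    have hx : c i ≠ 0 := (hmin.trans hi).ne'
    have hn1 : ((n : ℝ) + 1) ≠ 0 := by positivity
    rw [hrec i, hqdef]
    field_simp
    ring
  -- invariant
  have hinv : ∀ i, cmin < c i ∧ c i ≤ c 0 := by
    intro i
    induction i with
    | zero => exact ⟨h0, le_refl _⟩
    | succ k ih =>
      obtain ⟨h1, h2⟩ := ih
      have hs := hstep k h1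
      have hlt := hqlt _ h1 h2
      have hpos := hqpos _ h1
      constructor
      · nlinarith [mul_pos (sub_pos.mpr h1) (sub_pos.mpr hlt)]
      · nlinarith [mul_nonneg (sub_pos.mpr h1).le hpos.le]
  have hanti : Antitone c := by
    apply antitone_nat_of_succ_le
    intro i
    have h1 := (hinv i).1
    have hs := hstep i h1
    have hpos := hqpos _ h1
    nlinarith [mul_nonneg (sub_pos.mpr h1).le hpos.le]
  have hbdd : BddBelow (Set.range c) := ⟨cmin, by rintro y ⟨i, rfl⟩; exact (hinv i).1.le⟩
  set L : ℝ := ⨅ i, c i with hLdef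
  have hL : Tendsto c atTop (nhds L) := tendsto_atTop_ciInf hanti hbdd
  have hLc : cmin ≤ L := le_ciInf fun i => (hinv i).1.le
  have hLle : ∀ i, L ≤ c i := fun i => ciInf_le hbdd i
  -- L = cmin
  have hLeq : L = cmin := by
    by_contra hne
    have hL' : cmin < L := lt_of_le_of_ne hLc (Ne.symm hne)
    set δ : ℝ := p L * (cmin / (((n : ℝ) + 1) * c 0)) with hδdef
    have hδ : 0 < δ := mul_pos (hppos L hL') (div_pos hmin (by positivity))
    have hδq : ∀ i, δ ≤ q (c i) := by
      intro i
      have h1 := (hinv i).1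
      have h2 := (hinv i).2
      have hcp : 0 < c i := hmin.trans h1
      have hpL : p L ≤ p (c i) := hpmono L (c i) hLc (hLle i)
      have hr : cmin / (((n : ℝ) + 1) * c 0) ≤ (c i + cmin) / (((n : ℝ) + 1) * c i) := by
        apply div_le_div₀ (by linarith) (by linarith) (by positivity)
        nlinarith
      calc δ = p L * (cmin / (((n : ℝ) + 1) * c 0)) := rfl
        _ ≤ p (c i) * ((c i + cmin) / (((n : ℝ) + 1) * c i)) :=
            mul_le_mul hpL hr (by positivity) (hppos _ h1).le
        _ = q (c i) := rfl
    have hδ1 : δ < 1 := lt_of_le_of_lt (hδq 0) (hqlt _ h0 le_rfl)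
    have hdecay : ∀ i, c i - cmin ≤ (c 0 - cmin) * (1 - δ) ^ i := by
      intro i
      induction i with
      | zero => simp
      | succ k ih =>
        have h1 := (hinv k).1
        have hs := hstep k h1
        have hq1 := hδq k
        have hq2 := hqlt _ h1 (hinv k).2
        have : c (k + 1) - cmin = (c k - cmin) * (1 - q (c k)) := by rw [hs]; ring
        have h4 : (0:ℝ) ≤ (c 0 - cmin) * (1 - δ) ^ k :=
          mul_nonneg (by linarith [h0]) (pow_nonneg (by linarith) k)
        rw [this, pow_succ, ← mul_assoc]
        exact mul_le_mul ih (by linarith) (by linarith) h4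
    have hpow : Tendsto (fun i : ℕ => (1 - δ) ^ i) atTop (nhds 0) :=
      tendsto_pow_atTop_nhds_zero_of_lt_one (by linarith) (by linarith)
    have hupper : Tendsto (fun i => cmin + (c 0 - cmin) * (1 - δ) ^ i) atTop (nhds cmin) := by
      have := (hpow.const_mul (c 0 - cmin)).const_add cmin
      simpa using this
    have hsq : Tendsto c atTop (nhds cmin) := by
      apply tendsto_of_tendsto_of_tendsto_of_le_of_le tendsto_const_nhds hupper
      · intro i; exact (hinv i).1.le
      · intro i; have := hdecay i; simp only []; linarith
    exact hne (tendsto_nhds_unique hL hsq)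
  rw [hLeq] at hL
  refine ⟨hL, ?_⟩
  -- continuity of q at cmin, with q cmin = 0
  have hpfun : p = fun x => x * (x ^ 2 - cmin ^ 2) ^ e * K := funext hp'
  have hqc : ContinuousAt q cmin := by
    rw [hqdef, hpfun]
    have h1 : ContinuousAt (fun x : ℝ => (x ^ 2 - cmin ^ 2) ^ e) cmin := by
      apply ContinuousAt.rpow_const
      · exact ((continuous_pow 2).sub continuous_const).continuousAt
      · exact Or.inr he.le
    have h2 : ContinuousAt (fun x : ℝ => x * (x ^ 2 - cmin ^ 2) ^ e * K) cmin :=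
      (continuousAt_id.mul h1).mul continuousAt_const
    apply h2.mul
    apply ContinuousAt.div
    · exact (continuousAt_id.add continuousAt_const)
    · exact continuousAt_const.mul continuousAt_id
    · positivity
  have hq0 : q cmin = 0 := by
    rw [hqdef, hpfun]
    simp only [sub_self, Real.zero_rpow he.ne', mul_zero, zero_mul]
  have hqt : Tendsto (fun i => q (c i)) atTop (nhds 0) := by
    rw [← hq0]
    exact (hqc.tendsto).comp hL
  have hratio : ∀ i, (c (i + 1) - cmin) / (c i - cmin) = 1 - q (c i) := by
    intro i
    have h1 := (hinv i).1
    have hs := hstep i h1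
    have hne : c i - cmin ≠ 0 := (sub_pos.mpr h1).ne'
    rw [hs]
    field_simp
    ring
  have : Tendsto (fun i => 1 - q (c i)) atTop (nhds 1) := by
    have := hqt.const_sub 1
    simpa using this
  exact this.congr fun i => (hratio i).symm
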